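/- Let α₄ := (2/3)·(2 − (√2 − 1)^{−1/3} + (√2 − 1)^{1/3}). Then 2/3 < α₄ < 2/√3, and for every real α with 2/3 < α < 2/√3 one has 4 − 8/(3α) ≤ (4 − 3α²)/(4 − 3α) if and only if α ≤ α₄; in particular 4 − 8/(3α₄) = (4 − 3α₄²)/(4 − 3α₄). (This is the statement that α_*(4) = α₄ for m(α,4) = min{(4−3α²)/(4−3α), 4 − 8/(3α)}.) -/
import Mathlib

noncomputable def alphaStar4 : ℝ :=
  (2 / 3) * (2 - (Real.sqrt 2 - 1) ^ (-(1 : ℝ) / 3) + (Real.sqrt 2 - 1) ^ ((1 : ℝ) / 3))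

private lemma cubic_mono {x y : ℝ} (h : x < y) :
    9*x^3 - 36*x^2 + 60*x - 32 < 9*y^3 - 36*y^2 + 60*y - 32 := by
  nlinarith [sq_nonneg (x + y - 8/3), sq_nonneg (x - y), sq_nonneg (x + y), sub_pos.mpr h]

private lemma main_aux (a : ℝ) (h0 : 9*a^3 - 36*a^2 + 60*a - 32 = 0)
    (hal : 2 / 3 < a) (har : a < 2 / Real.sqrt 3) :
    (2 / 3 < a ∧ a < 2 / Real.sqrt 3) ∧
    (∀ α : ℝ, 2 / 3 < α → α < 2 / Real.sqrt 3 →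
      (4 - 8 / (3 * α) ≤ (4 - 3 * α ^ 2) / (4 - 3 * α) ↔ α ≤ a)) ∧
    4 - 8 / (3 * a) = (4 - 3 * a ^ 2) / (4 - 3 * a) := by
  have hs : Real.sqrt 3 ^ 2 = 3 := Real.sq_sqrt (by norm_num)
  have hs0 : 0 < Real.sqrt 3 := Real.sqrt_pos.mpr (by norm_num)
  have hs1 : 3/2 < Real.sqrt 3 := by nlinarith
  have key : ∀ α : ℝ, 2/3 < α → α < 2 / Real.sqrt 3 →
      (4 - 8 / (3 * α) ≤ (4 - 3 * α ^ 2) / (4 - 3 * α) ↔ α ≤ a) := by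
    intro α h1 h2
    have hd1 : (0:ℝ) < 3 * α := by linarith
    have h2' : α * Real.sqrt 3 < 2 := (lt_div_iff₀ hs0).mp h2
    have hd2 : (0:ℝ) < 4 - 3 * α := by nlinarith
    have hfrac : 4 - 8 / (3 * α) = (12*α - 8) / (3*α) := by
      field_simp; ring
    rw [hfrac, div_le_div_iff₀ hd1 hd2]
    constructor
    · intro h
      by_contra hgt
      push_neg at hgt
      have hm := cubic_mono hgt
      linarith
    · intro h
      rcases eq_or_lt_of_le h with rfl | hlt
      · linarith
      · have hm := cubic_mono hlt
        linarith
  refine ⟨⟨hal, har⟩, key, ?_⟩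
  have ha2 : a * Real.sqrt 3 < 2 := (lt_div_iff₀ hs0).mp har
  have hne1 : (3:ℝ) * a ≠ 0 := by positivity
  have hne2 : (4:ℝ) - 3 * a ≠ 0 := by nlinarith
  field_simp
  linear_combination h0

/-- `2/3 < α₄ < 2/√3`, and for every real `α` with `2/3 < α < 2/√3`
one has `4 − 8/(3α) ≤ (4 − 3α²)/(4 − 3α)` if and only if `α ≤ α₄`; in particular
`4 − 8/(3α₄) = (4 − 3α₄²)/(4 − 3α₄)`. This is the statement `α_*(4) = α₄`. -/
theorem statement4 :
    (2 / 3 < alphaStar4 ∧ alphaStar4 < 2 / Real.sqrt 3) ∧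
    (∀ α : ℝ, 2 / 3 < α → α < 2 / Real.sqrt 3 →
      (4 - 8 / (3 * α) ≤ (4 - 3 * α ^ 2) / (4 - 3 * α) ↔ α ≤ alphaStar4)) ∧
    4 - 8 / (3 * alphaStar4) = (4 - 3 * alphaStar4 ^ 2) / (4 - 3 * alphaStar4) := by
  have hx : Real.sqrt 2 ^ 2 = 2 := Real.sq_sqrt (by norm_num)
  have hx0 : 0 ≤ Real.sqrt 2 := Real.sqrt_nonneg 2
  have hx1 : 1 < Real.sqrt 2 := by nlinarith
  set x := Real.sqrt 2 with hxdef
  have hpos : (0:ℝ) < x - 1 := by linarith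
  set t := (x - 1) ^ ((1:ℝ)/3) with htdef
  have ht : 0 < t := Real.rpow_pos_of_pos hpos _
  have ht3 : t ^ 3 = x - 1 := by
    rw [htdef, ← Real.rpow_natCast ((x-1) ^ ((1:ℝ)/3)) 3, ← Real.rpow_mul hpos.le]
    norm_num
  have hneg : (x - 1) ^ (-(1:ℝ)/3) = t⁻¹ := by
    rw [htdef, ← Real.rpow_neg_one t, htdef, ← Real.rpow_mul hpos.le]
    norm_num
  set v := t⁻¹ with hvdef
  have htv : t * v = 1 := mul_inv_cancel₀ ht.ne'
  have hv3v : v ^ 3 * (x - 1) = 1 := by rw [← ht3, hvdef]; field_simp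
  have hv3 : v ^ 3 = x + 1 := by linear_combination (x+1)*hv3v - v^3*hx
  have ha : alphaStar4 = (2/3) * (2 - v + t) := by
    rw [alphaStar4, hneg]
  clear_value t
  clear_value x
  obtain ⟨u, hudef⟩ : ∃ u : ℝ, u = t - v := ⟨_, rfl⟩
  have hu : u ^ 3 + 3*u + 2 = 0 := by
    rw [hudef]; linear_combination ht3 - hv3 + 3*(v - t)*htv
  have ha' : alphaStar4 = (2/3) * (2 + u) := by rw [ha, hudef]; ring
  have hu1 : -1 < u := by
    by_contra h
    push_neg at h
    nlinarith [sq_nonneg (2*u - 1)]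
  have hs : Real.sqrt 3 ^ 2 = 3 := Real.sq_sqrt (by norm_num)
  have hs0 : 0 < Real.sqrt 3 := Real.sqrt_pos.mpr (by norm_num)
  have hs1 : 3/2 < Real.sqrt 3 := by nlinarith
  set s := Real.sqrt 3 with hsdef
  have hs3 : s ^ 3 = 3 * s := by linear_combination s * hs
  have hu2 : u < s - 2 := by
    by_contra h
    push_neg at h
    have hq : (0:ℝ) < u^2 + u*(s-2) + (s-2)^2 + 3 := by
      nlinarith [sq_nonneg (u + (s-2)), sq_nonneg u, sq_nonneg (s-2)]
    have hprod : 0 ≤ (u - (s-2)) * (u^2 + u*(s-2) + (s-2)^2 + 3) :=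
      mul_nonneg (by linarith) hq.le
    nlinarith [hprod, hu, hs3, hs1]
  have hal : 2/3 < alphaStar4 := by rw [ha']; linarith
  have har : alphaStar4 < 2 / s := by
    rw [lt_div_iff₀ hs0, ha']
    have h1 : s * (2 + u) < s * s := mul_lt_mul_of_pos_left (by linarith) hs0
    nlinarith [h1, hs]
  have h0 : 9*alphaStar4^3 - 36*alphaStar4^2 + 60*alphaStar4 - 32 = 0 := by
    rw [ha]
    linear_combination (8/3)*ht3 - (8/3)*hv3 + 8*(v - t)*htv
  rw [hsdef] at har
  exact main_aux alphaStar4 h0 hal har
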